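/- Let l ∈ [0,1]ⁿ with d₁(l, V_odd) = 1, where V_odd is the set of odd vertices of the unit n-cube. Then any closed spherical polygon in S³ with edge lengths π·l₁, …, π·l_n has all its vertices on a single great circle, and any two such polygons differ by an isometry of S³. -/

import Mathlib

open Finset

/-- Geodesic distance on the unit sphere of `ℝ⁴`. -/
noncomputable def sphereDist4 (x y : EuclideanSpace ℝ (Fin 4)) : ℝ :=
  Real.arccos (inner ℝ x y)

namespace SP
open Real RealInnerProductSpace
open Fin.NatCast
local notation "E" => EuclideanSpace ℝ (Fin 4)

lemma inner_mem {x y : E} (hx : ‖x‖ = 1) (hy : ‖y‖ = 1) :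
    ⟪x, y⟫ ∈ Set.Icc (-1 : ℝ) 1 := by
  have h := abs_real_inner_le_norm x y
  rw [hx, hy, mul_one] at h
  exact ⟨neg_le_of_abs_le h, le_of_abs_le h⟩

lemma sd_def (x y : E) : sphereDist4 x y = Real.arccos ⟪x, y⟫ := rfl

lemma cos_sd {x y : E} (hx : ‖x‖ = 1) (hy : ‖y‖ = 1) :
    Real.cos (sphereDist4 x y) = ⟪x, y⟫ :=
  Real.cos_arccos (inner_mem hx hy).1 (inner_mem hx hy).2

lemma sd_symm (x y : E) : sphereDist4 x y = sphereDist4 y x := by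
  rw [sd_def, sd_def, real_inner_comm]

lemma sd_nonneg (x y : E) : 0 ≤ sphereDist4 x y := Real.arccos_nonneg _

lemma sd_le_pi (x y : E) : sphereDist4 x y ≤ π := Real.arccos_le_pi _

lemma sd_self {x : E} (hx : ‖x‖ = 1) : sphereDist4 x x = 0 := by
  rw [sd_def, real_inner_self_eq_norm_sq, hx]; simp

lemma arccos_le_arccos' {x y : ℝ} (h : x ≤ y) : Real.arccos y ≤ Real.arccos x := by
  rw [Real.arccos_eq_pi_div_two_sub_arcsin, Real.arccos_eq_pi_div_two_sub_arcsin]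
  linarith [Real.monotone_arcsin h]

lemma exists_basis_pair {a b : E} (ha : ‖a‖ = 1) (hb : ‖b‖ = 1) (hab : ⟪a, b⟫ = 0) :
    ∃ B : OrthonormalBasis (Fin 4) ℝ E, B 0 = a ∧ B 1 = b := by
  have hcard : Module.finrank ℝ E = Fintype.card (Fin 4) := by
    simp [finrank_euclideanSpace]
  set vv : Fin 4 → E := fun i => if i = 0 then a else b with hvv
  have horth : Orthonormal ℝ (({0, 1} : Set (Fin 4)).domRestrict vv) := by
    constructor
    · rintro ⟨i, hi⟩
      rcases hi with rfl | hi
      · simpa [vv] using ha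
      · simp only [Set.mem_singleton_iff] at hi
        subst hi
        simpa [vv] using hb
    · rintro ⟨i, hi⟩ ⟨j, hj⟩ hne
      have hij : i ≠ j := fun h => hne (Subtype.ext h)
      simp only [Set.mem_insert_iff, Set.mem_singleton_iff] at hi hj
      simp only [Set.restrict_apply]
      rcases hi with rfl | rfl <;> rcases hj with rfl | rfl
      · exact absurd rfl hij
      · simpa [vv] using hab
      · rw [show vv 1 = b from if_neg (by decide), show vv 0 = a from if_pos rfl,
          real_inner_comm]
        exact hab
      · exact absurd rfl hij
  obtain ⟨B, hB⟩ := horth.exists_orthonormalBasis_extension_of_card_eq hcard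
  exact ⟨B, by simpa [vv] using hB 0 (by simp), by simpa [vv] using hB 1 (by simp)⟩

lemma exists_unit_perp (x : E) (hx : ‖x‖ = 1) : ∃ u : E, ‖u‖ = 1 ∧ ⟪x, u⟫ = 0 := by
  have hcard : Module.finrank ℝ E = Fintype.card (Fin 4) := by
    simp [finrank_euclideanSpace]
  have horth : Orthonormal ℝ (({0} : Set (Fin 4)).domRestrict (fun _ => x)) := by
    constructor
    · rintro ⟨i, hi⟩; simpa using hx
    · rintro ⟨i, hi⟩ ⟨j, hj⟩ hne
      rcases hi with rfl
      rcases hj with rfl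
      exact absurd rfl hne
  obtain ⟨B, hB⟩ := horth.exists_orthonormalBasis_extension_of_card_eq hcard
  have h0 : B 0 = x := hB 0 (by simp)
  refine ⟨B 1, B.orthonormal.1 1, ?_⟩
  rw [← h0]
  exact B.orthonormal.2 (by decide : (0 : Fin 4) ≠ 1)


lemma inner_combo {x u w' : E} (hx : ‖x‖ = 1) (hxu : ⟪x, u⟫ = 0) (hxw : ⟪x, w'⟫ = 0)
    (c1 s1 c2 s2 : ℝ) :
    (⟪c1 • x + s1 • u, c2 • x + s2 • w'⟫ : ℝ) = c1 * c2 + s1 * s2 * ⟪u, w'⟫ := by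
  rw [inner_add_left, inner_add_right, inner_add_right, real_inner_smul_left,
    real_inner_smul_left, real_inner_smul_left, real_inner_smul_left,
    real_inner_smul_right, real_inner_smul_right, real_inner_smul_right,
    real_inner_smul_right, real_inner_self_eq_norm_sq, hx, hxw,
    show (⟪u, x⟫ : ℝ) = 0 from (real_inner_comm u x).symm.trans hxu]
  ring

lemma decomp (hx : ‖x‖ = 1) (hy : ‖y‖ = 1) :
    ∃ u : E, ‖u‖ = 1 ∧ ⟪x, u⟫ = 0 ∧
      y = Real.cos (sphereDist4 x y) • x + Real.sin (sphereDist4 x y) • u := by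
  set t : ℝ := ⟪x, y⟫ with ht
  have htm := inner_mem hx hy
  have hcos : Real.cos (sphereDist4 x y) = t := cos_sd hx hy
  have hsin : Real.sin (sphereDist4 x y) = Real.sqrt (1 - t ^ 2) := Real.sin_arccos t
  set z : E := y - t • x with hz
  have hxz : ⟪x, z⟫ = 0 := by
    rw [hz, inner_sub_right, real_inner_smul_right, real_inner_self_eq_norm_sq, hx]
    ring
  have hz2 : ‖z‖ ^ 2 = 1 - t ^ 2 := by
    rw [← real_inner_self_eq_norm_sq, hz]
    rw [inner_sub_left, inner_sub_right, inner_sub_right, real_inner_smul_left,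
      real_inner_smul_left, real_inner_smul_right, real_inner_smul_right,
      real_inner_self_eq_norm_sq, real_inner_self_eq_norm_sq, hx, hy,
      show (inner ℝ y x : ℝ) = t from (real_inner_comm x y).trans ht.symm]
    ring
  have hnz : ‖z‖ = Real.sqrt (1 - t ^ 2) := by
    rw [← hz2, Real.sqrt_sq (norm_nonneg z)]
  by_cases hz0 : z = 0
  · obtain ⟨u, hu, hxu⟩ := exists_unit_perp x hx
    refine ⟨u, hu, hxu, ?_⟩
    have h0 : Real.sin (sphereDist4 x y) = 0 := by
      rw [hsin, ← hnz, hz0, norm_zero]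
    rw [hcos, h0, zero_smul, add_zero]
    have : y - t • x = 0 := by rw [← hz, hz0]
    linear_combination (norm := module) this
  · have hzn : ‖z‖ ≠ 0 := norm_ne_zero_iff.mpr hz0
    refine ⟨‖z‖⁻¹ • z, ?_, ?_, ?_⟩
    · rw [norm_smul, norm_inv, norm_norm, inv_mul_cancel₀ hzn]
    · rw [real_inner_smul_right, hxz, mul_zero]
    · rw [hcos, hsin, ← hnz, smul_smul, mul_inv_cancel₀ hzn, one_smul, hz]
      module

lemma sd_triangle (hx : ‖x‖ = 1) (hy : ‖y‖ = 1) (hz : ‖z‖ = 1) :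
    sphereDist4 x z ≤ sphereDist4 x y + sphereDist4 y z := by
  obtain ⟨a, ha, hya, hxa⟩ := decomp hy hx
  obtain ⟨b, hb, hyb, hzb⟩ := decomp hy hz
  set α : ℝ := sphereDist4 x y with hα
  set β : ℝ := sphereDist4 y z with hβ
  rw [← sd_symm] at hxa
  have hα0 : 0 ≤ α := Real.arccos_nonneg _
  have hαpi : α ≤ π := Real.arccos_le_pi _
  have hβ0 : 0 ≤ β := Real.arccos_nonneg _
  have hβpi : β ≤ π := Real.arccos_le_pi _
  have hinner : ⟪x, z⟫ = Real.cos α * Real.cos β + Real.sin α * Real.sin β * ⟪a, b⟫ := by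
    rw [hxa, hzb]
    rw [inner_add_left, inner_add_right, inner_add_right, real_inner_smul_left,
      real_inner_smul_left, real_inner_smul_left, real_inner_smul_left,
      real_inner_smul_right, real_inner_smul_right, real_inner_smul_right,
      real_inner_smul_right, real_inner_self_eq_norm_sq, hy, hyb,
      show (inner ℝ a y : ℝ) = 0 from (real_inner_comm a y).symm.trans hya, ← hα]
    ring
  have hsα : 0 ≤ Real.sin α := Real.sin_nonneg_of_nonneg_of_le_pi hα0 hαpi
  have hsβ : 0 ≤ Real.sin β := Real.sin_nonneg_of_nonneg_of_le_pi hβ0 hβpi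
  have hab : -1 ≤ ⟪a, b⟫ := (inner_mem ha hb).1
  have hlow : Real.cos (α + β) ≤ ⟪x, z⟫ := by
    rw [Real.cos_add, hinner]
    nlinarith [mul_nonneg hsα hsβ]
  by_cases hle : α + β ≤ π
  · calc sphereDist4 x z ≤ Real.arccos (Real.cos (α + β)) := arccos_le_arccos' hlow
      _ = α + β := Real.arccos_cos (by linarith) hle
  · calc sphereDist4 x z ≤ π := Real.arccos_le_pi _
      _ ≤ α + β := le_of_not_ge hle


lemma master {n : ℕ} [NeZero n] (l v : Fin n → ℝ)
    (hl : ∀ i, l i ∈ Set.Icc (0 : ℝ) 1)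
    (hv : ∀ i, v i = 0 ∨ v i = 1)
    (hodd : ∃ m : ℤ, ∑ i, v i = 2 * (m : ℝ) + 1)
    (hsum : ∑ i, |l i - v i| = 1)
    (p : Fin n → E) (hp : ∀ k, ‖p k‖ = 1)
    (he : ∀ k : Fin n, sphereDist4 (p k) (p (k + 1)) = π * l k) :
    ∃ a b : E, ‖a‖ = 1 ∧ ‖b‖ = 1 ∧ ⟪a, b⟫ = 0 ∧ ∀ k : Fin n,
      p k = ((-1 : ℝ) ^ (∑ i ∈ Finset.range k.val,
            (if v (i : Fin n) = 1 then 1 else 0 : ℕ))) •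
        ((Real.cos (π * ∑ i ∈ Finset.range k.val, |l (i : Fin n) - v (i : Fin n)|)) • a +
         (Real.sin (π * ∑ i ∈ Finset.range k.val, |l (i : Fin n) - v (i : Fin n)|)) • b) := by
  classical
  set w : ℕ → ℕ := fun i => if v (i : Fin n) = 1 then 1 else 0 with hw
  set σ : ℕ → ℝ := fun j => (-1 : ℝ) ^ (∑ i ∈ Finset.range j, w i) with hσ
  set D : ℕ → ℝ := fun j => π * ∑ i ∈ Finset.range j, |l (i : Fin n) - v (i : Fin n)| with hD
  set Q : ℕ → E := fun j => σ j • p ((j : ℕ) : Fin n) with hQ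
  have hσsq : ∀ j, σ j * σ j = 1 := by
    intro j
    rw [hσ]
    simp only
    rw [← mul_pow]
    norm_num
  have habsσ : ∀ j, |σ j| = 1 := by
    intro j
    rw [hσ]
    simp [abs_pow]
  have hQnorm : ∀ j, ‖Q j‖ = 1 := by
    intro j
    rw [hQ]
    simp only [norm_smul, Real.norm_eq_abs]
    rw [habsσ j, hp, mul_one]
  -- the edge lengths along the unfolded chain
  have hedge : ∀ j : ℕ, sphereDist4 (Q j) (Q (j + 1)) = D (j + 1) - D j := by
    intro j
    have hDstep : D (j + 1) - D j = π * |l (j : Fin n) - v (j : Fin n)| := by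
      rw [hD]; simp only [Finset.sum_range_succ]; ring
    have hcast : ((j + 1 : ℕ) : Fin n) = ((j : ℕ) : Fin n) + 1 := by push_cast; ring
    have hinner : (⟪Q j, Q (j + 1)⟫ : ℝ) =
        (-1 : ℝ) ^ (w j) * ⟪p ((j : ℕ) : Fin n), p (((j : ℕ) : Fin n) + 1)⟫ := by
      have hQj : Q j = σ j • p ((j : ℕ) : Fin n) := rfl
      have hQj1 : Q (j + 1) = σ (j + 1) • p (((j : ℕ) : Fin n) + 1) := by
        show σ (j + 1) • p (((j + 1 : ℕ) : Fin n)) = _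
        rw [hcast]
      have hσstep : σ j * σ (j + 1) = (-1 : ℝ) ^ (w j) := by
        show ((-1 : ℝ) ^ (∑ i ∈ Finset.range j, w i)) *
          ((-1 : ℝ) ^ (∑ i ∈ Finset.range (j + 1), w i)) = _
        rw [Finset.sum_range_succ, pow_add, ← mul_assoc, ← mul_pow]
        norm_num
      rw [hQj, hQj1, real_inner_smul_left, real_inner_smul_right, ← mul_assoc, hσstep]
    have hpc : (⟪p ((j : ℕ) : Fin n), p (((j : ℕ) : Fin n) + 1)⟫ : ℝ) =
        Real.cos (π * l ((j : ℕ) : Fin n)) := by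
      rw [← he ((j : ℕ) : Fin n), cos_sd (hp _) (hp _)]
    have hl1 := hl ((j : ℕ) : Fin n)
    have h0le : 0 ≤ π * l ((j : ℕ) : Fin n) :=
      mul_nonneg Real.pi_pos.le hl1.1
    have hlepi : π * l ((j : ℕ) : Fin n) ≤ π := by
      nlinarith [Real.pi_pos, hl1.2]
    rw [hDstep]
    show Real.arccos (⟪Q j, Q (j+1)⟫) = _
    rw [hinner, hpc]
    rcases hv ((j : ℕ) : Fin n) with h0 | h1
    · have hwj : w j = 0 := by rw [hw]; simp [h0]
      rw [hwj, pow_zero, one_mul, Real.arccos_cos h0le hlepi, h0, sub_zero,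
        abs_of_nonneg hl1.1]
    · have hwj : w j = 1 := by rw [hw]; simp [h1]
      rw [hwj, pow_one, neg_one_mul, Real.arccos_neg, Real.arccos_cos h0le hlepi, h1,
        abs_of_nonpos (by linarith [hl1.2])]
      ring
  have hD0 : D 0 = 0 := by rw [hD]; simp
  have hDn : D n = π := by
    have h1 : ∑ i ∈ Finset.range n, |l (i : Fin n) - v (i : Fin n)| = 1 := by
      rw [← Fin.sum_univ_eq_sum_range (fun i => |l (i : Fin n) - v (i : Fin n)|) n, ← hsum]
      apply Finset.sum_congr rfl
      intro i _
      rw [Fin.cast_val_eq_self]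
    show π * ∑ i ∈ Finset.range n, |l (i : Fin n) - v (i : Fin n)| = π
    rw [h1, mul_one]
  have hDmono : ∀ a b : ℕ, a ≤ b → D a ≤ D b := by
    intro a b hab
    show π * _ ≤ π * _
    apply mul_le_mul_of_nonneg_left _ Real.pi_pos.le
    apply Finset.sum_le_sum_of_subset_of_nonneg (Finset.range_subset_range.mpr hab)
    intros
    exact abs_nonneg _
  have hQn : Q n = -Q 0 := by
    have hoddw : Odd (∑ i ∈ Finset.range n, w i) := by
      obtain ⟨m, hm⟩ := hodd
      have hcast2 : ((∑ i ∈ Finset.range n, w i : ℕ) : ℝ) = 2 * (m : ℝ) + 1 := by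
        rw [← hm]
        push_cast
        rw [← Fin.sum_univ_eq_sum_range (fun i => ((w i : ℕ) : ℝ)) n]
        apply Finset.sum_congr rfl
        intro i _
        show ((if v ((i.val : ℕ) : Fin n) = 1 then 1 else 0 : ℕ) : ℝ) = v i
        rw [Fin.cast_val_eq_self]
        rcases hv i with h0 | h0 <;> simp [h0]
      have h2 : ((∑ i ∈ Finset.range n, w i : ℕ) : ℤ) = 2 * m + 1 := by
        exact_mod_cast hcast2
      have h3 : Odd ((∑ i ∈ Finset.range n, w i : ℕ) : ℤ) := by
        rw [h2]; exact odd_two_mul_add_one m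
      exact Int.odd_coe_nat _ |>.mp h3
    have hσn : σ n = -1 := by
      show (-1 : ℝ) ^ (∑ i ∈ Finset.range n, w i) = -1
      exact Odd.neg_one_pow hoddw
    show σ n • p ((n : ℕ) : Fin n) = -(σ 0 • p ((0 : ℕ) : Fin n))
    rw [hσn, Fin.natCast_self, Nat.cast_zero]
    show (-1 : ℝ) • p 0 = -((-1 : ℝ) ^ (∑ i ∈ Finset.range 0, w i) • p 0)
    simp
  have hπ : sphereDist4 (Q 0) (Q n) = π := by
    rw [hQn]
    show Real.arccos _ = π
    rw [inner_neg_right, real_inner_self_eq_norm_sq, hQnorm]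
    norm_num
  -- upper bound along the chain
  have hub : ∀ a b : ℕ, a ≤ b → sphereDist4 (Q a) (Q b) ≤ D b - D a := by
    intro a b hab
    induction b, hab using Nat.le_induction with
    | base => rw [sd_self (hQnorm a)]; simp
    | succ b hb ih =>
      calc sphereDist4 (Q a) (Q (b + 1)) ≤
          sphereDist4 (Q a) (Q b) + sphereDist4 (Q b) (Q (b + 1)) :=
            sd_triangle (hQnorm a) (hQnorm b) (hQnorm (b + 1))
        _ ≤ (D b - D a) + (D (b + 1) - D b) := by
            have := hedge b
            linarith
        _ = D (b + 1) - D a := by ring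
  -- exact distances
  have heq : ∀ a b : ℕ, a ≤ b → b ≤ n → sphereDist4 (Q a) (Q b) = D b - D a := by
    intro a b hab hbn
    have h1 := hub a b hab
    have h2 := hub 0 a (Nat.zero_le a)
    have h3 := hub b n hbn
    have h4 : π ≤ sphereDist4 (Q 0) (Q a) + sphereDist4 (Q a) (Q b) + sphereDist4 (Q b) (Q n) := by
      rw [← hπ]
      calc sphereDist4 (Q 0) (Q n) ≤ sphereDist4 (Q 0) (Q b) + sphereDist4 (Q b) (Q n) :=
            sd_triangle (hQnorm 0) (hQnorm b) (hQnorm n)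
        _ ≤ sphereDist4 (Q 0) (Q a) + sphereDist4 (Q a) (Q b) + sphereDist4 (Q b) (Q n) := by
            have := sd_triangle (hQnorm 0) (hQnorm a) (hQnorm b)
            linarith
    rw [hD0] at h2
    rw [hDn] at h3
    linarith
  -- main induction: common direction vector
  have hmain : ∀ k : ℕ, k ≤ n → ∃ u : E, ‖u‖ = 1 ∧ ⟪Q 0, u⟫ = 0 ∧
      ∀ j : ℕ, j ≤ k → Q j = Real.cos (D j) • Q 0 + Real.sin (D j) • u := by
    intro k
    induction k with
    | zero =>
      intro _
      obtain ⟨u, hu, hperp⟩ := exists_unit_perp (Q 0) (hQnorm 0)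
      refine ⟨u, hu, hperp, ?_⟩
      intro j hj
      interval_cases j
      rw [hD0]
      simp
    | succ k ih =>
      intro hk1
      have hk : k ≤ n := Nat.le_of_succ_le hk1
      obtain ⟨u, hu, hup, hform⟩ := ih hk
      have hdk1 : sphereDist4 (Q 0) (Q (k + 1)) = D (k + 1) := by
        rw [heq 0 (k + 1) (Nat.zero_le _) hk1, hD0, sub_zero]
      obtain ⟨ww, hww, hwperp, hQk1⟩ := decomp (hQnorm 0) (hQnorm (k + 1))
      rw [hdk1] at hQk1
      by_cases hall : ∀ j : ℕ, j ≤ k → Real.sin (D j) = 0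
      · refine ⟨ww, hww, hwperp, ?_⟩
        intro j hj
        rcases Nat.lt_or_ge j (k + 1) with hlt | hge
        · have hjk : j ≤ k := Nat.lt_succ_iff.mp hlt
          rw [hform j hjk, hall j hjk]
          simp
        · have : j = k + 1 := le_antisymm hj hge
          subst this
          exact hQk1
      · push_neg at hall
        obtain ⟨j, hj, hsj⟩ := hall
        by_cases hsk : Real.sin (D (k + 1)) = 0
        · refine ⟨u, hu, hup, ?_⟩
          intro i hi
          rcases Nat.lt_or_ge i (k + 1) with hlt | hge
          · exact hform i (Nat.lt_succ_iff.mp hlt)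
          · have : i = k + 1 := le_antisymm hi hge
            subst this
            rw [hQk1, hsk]
            simp
        · -- show ww = u
          have hdj : sphereDist4 (Q j) (Q (k + 1)) = D (k + 1) - D j :=
            heq j (k + 1) (hj.trans (Nat.le_succ k)) hk1
          have hA : (⟪Q j, Q (k + 1)⟫ : ℝ) = Real.cos (D (k + 1) - D j) := by
            rw [← hdj]
            exact (cos_sd (hQnorm j) (hQnorm (k + 1))).symm
          rw [hform j hj, hQk1] at hA
          have hinner : Real.cos (D j) * Real.cos (D (k + 1)) +
              Real.sin (D j) * Real.sin (D (k + 1)) * ⟪u, ww⟫ =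
              Real.cos (D (k + 1) - D j) :=
            (inner_combo (hQnorm 0) hup hwperp _ _ _ _).symm.trans hA
          have hcs : Real.cos (D (k + 1) - D j) =
              Real.cos (D (k + 1)) * Real.cos (D j) + Real.sin (D (k + 1)) * Real.sin (D j) :=
            Real.cos_sub _ _
          have huw : (⟪u, ww⟫ : ℝ) = 1 := by
            have hne : Real.sin (D j) * Real.sin (D (k + 1)) ≠ 0 := mul_ne_zero hsj hsk
            have h5 : Real.sin (D j) * Real.sin (D (k + 1)) * ⟪u, ww⟫ =
                Real.sin (D j) * Real.sin (D (k + 1)) * 1 := by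
              linear_combination hinner + hcs
            exact mul_left_cancel₀ hne h5
          have : u = ww := (inner_eq_one_iff_of_norm_eq_one hu hww).mp huw
          subst this
          refine ⟨u, hu, hup, ?_⟩
          intro i hi
          rcases Nat.lt_or_ge i (k + 1) with hlt | hge
          · exact hform i (Nat.lt_succ_iff.mp hlt)
          · have : i = k + 1 := le_antisymm hi hge
            subst this
            exact hQk1
  obtain ⟨u, hu, hup, hform⟩ := hmain n le_rfl
  refine ⟨Q 0, u, hQnorm 0, hu, hup, ?_⟩
  intro k
  show p k = σ k.val • (Real.cos (D k.val) • Q 0 + Real.sin (D k.val) • u)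
  rw [← hform k.val (Nat.le_of_lt k.isLt)]
  have h1 : Q (k.val) = σ k.val • p k := by
    show σ k.val • p ((k.val : ℕ) : Fin n) = σ k.val • p k
    rw [Fin.cast_val_eq_self]
  rw [h1, smul_smul, hσsq, one_smul]


end SP

open SP in
/-- If `l ∈ [0,1]ⁿ` is at `ℓ¹`-distance exactly `1` from the set of odd vertices of the unit
cube, then every closed spherical polygon in `S³` with edge lengths `π·lᵢ` is coaxial (its
vertices lie in a 2-dimensional linear subspace, i.e. on a great circle), and any two such
polygons differ by an isometry of `S³`. -/
theorem spherical_polygon_coaxial_unique (n : ℕ) [NeZero n] (l : Fin n → ℝ)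
    (hl : ∀ i, l i ∈ Set.Icc (0 : ℝ) 1)
    (hge : ∀ v : Fin n → ℝ,
      ((∀ i, v i = 0 ∨ v i = 1) ∧ ∃ m : ℤ, ∑ i, v i = 2 * (m : ℝ) + 1) →
      1 ≤ ∑ i, |l i - v i|)
    (hach : ∃ v : Fin n → ℝ,
      ((∀ i, v i = 0 ∨ v i = 1) ∧ ∃ m : ℤ, ∑ i, v i = 2 * (m : ℝ) + 1) ∧
      ∑ i, |l i - v i| = 1) :
    (∀ p : Fin n → EuclideanSpace ℝ (Fin 4),
      (∀ k, ‖p k‖ = 1) →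
      (∀ k : Fin n, sphereDist4 (p k) (p (k + 1)) = Real.pi * l k) →
      ∃ W : Submodule ℝ (EuclideanSpace ℝ (Fin 4)),
        Module.finrank ℝ W = 2 ∧ ∀ k, p k ∈ W) ∧
    (∀ p q : Fin n → EuclideanSpace ℝ (Fin 4),
      (∀ k, ‖p k‖ = 1) →
      (∀ k : Fin n, sphereDist4 (p k) (p (k + 1)) = Real.pi * l k) →
      (∀ k, ‖q k‖ = 1) →
      (∀ k : Fin n, sphereDist4 (q k) (q (k + 1)) = Real.pi * l k) →
      ∃ f : EuclideanSpace ℝ (Fin 4) ≃ₗᵢ[ℝ] EuclideanSpace ℝ (Fin 4),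
        ∀ k, f (p k) = q k) := by
  obtain ⟨v, ⟨hv01, hodd⟩, hsum⟩ := hach
  constructor
  · intro p hp he
    obtain ⟨a, b, ha, hb, hab, hrep⟩ := master l v hl hv01 hodd hsum p hp he
    have horth : Orthonormal ℝ (![a, b]) := by
      constructor
      · intro i
        fin_cases i
        · simpa using ha
        · simpa using hb
      · intro i j hij
        fin_cases i <;> fin_cases j
        · exact absurd rfl hij
        · simpa using hab
        · show (inner ℝ b a : ℝ) = 0
          exact (real_inner_comm a b).trans hab
        · exact absurd rfl hij
    refine ⟨Submodule.span ℝ {a, b}, ?_, ?_⟩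
    · have hset : ({a, b} : Set (EuclideanSpace ℝ (Fin 4))) = Set.range ![a, b] := by
        ext x
        simp [Fin.exists_fin_two, or_comm]
      rw [hset, finrank_span_eq_card horth.linearIndependent, Fintype.card_fin]
    · intro k
      rw [hrep k]
      exact Submodule.smul_mem _ _ (Submodule.add_mem _
        (Submodule.smul_mem _ _ (Submodule.subset_span (Set.mem_insert _ _)))
        (Submodule.smul_mem _ _ (Submodule.subset_span
          (Set.mem_insert_of_mem _ rfl))))
  · intro p q hp hep hq heq
    obtain ⟨a, b, ha, hb, hab, hrep⟩ := master l v hl hv01 hodd hsum p hp hep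
    obtain ⟨a', b', ha', hb', hab', hrep'⟩ := master l v hl hv01 hodd hsum q hq heq
    obtain ⟨B, hB0, hB1⟩ := exists_basis_pair ha hb hab
    obtain ⟨B', hB0', hB1'⟩ := exists_basis_pair ha' hb' hab'
    refine ⟨B.repr.trans B'.repr.symm, ?_⟩
    have hfa : (B.repr.trans B'.repr.symm) a = a' := by
      rw [← hB0, ← hB0']
      simp [LinearIsometryEquiv.trans_apply, OrthonormalBasis.repr_self,
        OrthonormalBasis.repr_symm_single]
    have hfb : (B.repr.trans B'.repr.symm) b = b' := by
      rw [← hB1, ← hB1']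
      simp [LinearIsometryEquiv.trans_apply, OrthonormalBasis.repr_self,
        OrthonormalBasis.repr_symm_single]
    intro k
    rw [hrep k, hrep' k, map_smul, map_add, map_smul, map_smul, hfa, hfb]
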